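/- Under the hypotheses of the paper (q_{c₂} ≥ 0 on D₀, S ≥ c₁ I > 0), for every u ∈ D₀ and every 0 < δ ≤ c₁c₂/(c₁+c₂): q₀(u) ≥ δ‖u‖² + δ‖S⁻¹Tu‖². In particular the form norm on D₀ controls both ‖u‖ and ‖S⁻¹Tu‖. -/
import Mathlib


open scoped RealInnerProductSpace

/-- Proposition 2 of the paper (continuous embedding `H₊₁ ⊆ {u : S⁻¹Tu ∈ H₀}`):
under the Hardy-like assumption `q_{c₂}(u) ≥ 0` on `D₀` and `S ≥ c₁ I > 0`, for every
`u ∈ D₀` and every `0 < δ ≤ c₁c₂/(c₁+c₂)` one has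
`q₀(u) ≥ δ‖u‖² + δ‖S⁻¹Tu‖²`. -/
theorem stmt6 {H : Type*} [NormedAddCommGroup H] [InnerProductSpace ℝ H]
    [CompleteSpace H] (D₀ : Submodule ℝ H)
    (T P : D₀ →ₗ[ℝ] H)
    (hP : ∀ u v : D₀, ⟪P u, (v : H)⟫ = ⟪(u : H), P v⟫)
    (S : H →L[ℝ] H) (hS : IsSelfAdjoint S)
    (c₁ : ℝ) (hc₁ : 0 < c₁) (hSc : ∀ v : H, c₁ * ‖v‖ ^ 2 ≤ ⟪S v, v⟫)
    (B C : H →L[ℝ] H) (c₂ : ℝ) (hc₂ : 0 < c₂)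
    (hB₁ : S ∘L B = 1) (hB₂ : B ∘L S = 1)
    (hC₁ : (S + c₂ • 1) ∘L C = 1) (hC₂ : C ∘L (S + c₂ • 1) = 1)
    (hq : ∀ u : D₀, 0 ≤ ⟪C (T u), T u⟫ + ⟪P u, (u : H)⟫ - c₂ * ‖(u : H)‖ ^ 2) :
    ∀ (δ : ℝ), 0 < δ → δ ≤ c₁ * c₂ / (c₁ + c₂) → ∀ u : D₀,
      δ * ‖(u : H)‖ ^ 2 + δ * ‖B (T u)‖ ^ 2 ≤ ⟪B (T u), T u⟫ + ⟪P u, (u : H)⟫ := by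

  intro δ hδ hδle u
  have hSsym : ∀ x y : H, ⟪S x, y⟫ = ⟪x, S y⟫ :=
    fun x y => (ContinuousLinearMap.isSelfAdjoint_iff_isSymmetric.mp hS) x y
  have hA : ∀ x y : H, ⟪(S + c₂ • (1 : H →L[ℝ] H)) x, y⟫ = ⟪x, (S + c₂ • (1 : H →L[ℝ] H)) y⟫ := by
    intro x y
    simp [ContinuousLinearMap.add_apply, ContinuousLinearMap.smul_apply,
      ContinuousLinearMap.one_apply, inner_add_left, inner_add_right,
      real_inner_smul_left, real_inner_smul_right, hSsym]
  set x : H := T u with hx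
  set w : H := B x with hw
  set z : H := C w with hz
  have hSw : S w = x := by
    have := congrArg (fun f : H →L[ℝ] H => f x) hB₁
    simpa using this
  have hAz : (S + c₂ • (1 : H →L[ℝ] H)) z = w := by
    have := congrArg (fun f : H →L[ℝ] H => f w) hC₁
    simpa using this
  have hCSw : C (S w) = w - c₂ • z := by
    have h : C ((S + c₂ • (1 : H →L[ℝ] H)) w) = w := by
      have := congrArg (fun f : H →L[ℝ] H => f w) hC₂
      simpa using this
    have h2 : C (S w) + c₂ • z = w := by
      rw [hz]
      simpa [ContinuousLinearMap.add_apply, ContinuousLinearMap.smul_apply,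
        map_add, map_smul] using h
    rw [eq_sub_iff_add_eq]
    exact h2
  set t : ℝ := ⟪z, w⟫ with ht
  have hzSw : ⟪z, S w⟫ = ‖w‖ ^ 2 - c₂ * t := by
    have h1 : ⟪z, (S + c₂ • (1 : H →L[ℝ] H)) w⟫ = ⟪(S + c₂ • (1 : H →L[ℝ] H)) z, w⟫ :=
      (hA z w).symm
    rw [hAz] at h1
    have : ⟪z, S w⟫ + c₂ * ⟪z, w⟫ = ‖w‖ ^ 2 := by
      rw [← real_inner_self_eq_norm_sq, ← h1]
      simp [ContinuousLinearMap.add_apply, ContinuousLinearMap.smul_apply,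
        inner_add_right, real_inner_smul_right]
    linarith [this]
  have hBxx : ⟪B x, x⟫ = ⟪w, S w⟫ := by rw [← hw, hSw]
  have hCxx : ⟪C x, x⟫ = ⟪w, S w⟫ - c₂ * ‖w‖ ^ 2 + c₂ ^ 2 * t := by
    calc ⟪C x, x⟫ = ⟪C (S w), S w⟫ := by rw [hSw]
    _ = ⟪w, S w⟫ - c₂ * ⟪z, S w⟫ := by
        rw [hCSw]; rw [inner_sub_left, real_inner_smul_left]
    _ = ⟪w, S w⟫ - c₂ * ‖w‖ ^ 2 + c₂ ^ 2 * t := by rw [hzSw]; ring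
  -- bound on t
  have htz : (c₁ + c₂) * ‖z‖ ^ 2 ≤ t := by
    have h1 : t = ⟪S z, z⟫ + c₂ * ‖z‖ ^ 2 := by
      rw [ht, ← hAz]
      simp [ContinuousLinearMap.add_apply, ContinuousLinearMap.smul_apply,
        inner_add_left, real_inner_smul_left, inner_add_right, real_inner_smul_right,
        real_inner_self_eq_norm_sq, real_inner_comm z]
    have h2 := hSc z
    nlinarith
  have htzw : t ≤ ‖z‖ * ‖w‖ := real_inner_le_norm z w
  have ht0 : 0 ≤ t := le_trans (by positivity) htz
  have htb : (c₁ + c₂) * t ≤ ‖w‖ ^ 2 := by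
    nlinarith [sq_nonneg (‖w‖ - (c₁ + c₂) * ‖z‖), norm_nonneg w, norm_nonneg z,
      mul_nonneg (norm_nonneg w) (norm_nonneg z)]
  have hqq := hq u
  have hδc : δ * (c₁ + c₂) ≤ c₁ * c₂ :=
    (le_div_iff₀ (by positivity : (0:ℝ) < c₁ + c₂)).mp hδle
  have hnw : ‖B (T u)‖ ^ 2 = ‖w‖ ^ 2 := by rw [hw, hx]
  have hkey : ⟪B (T u), T u⟫ = ⟪C (T u), T u⟫ + c₂ * ‖w‖ ^ 2 - c₂ ^ 2 * t := by
    have : ⟪B x, x⟫ = ⟪C x, x⟫ + c₂ * ‖w‖ ^ 2 - c₂ ^ 2 * t := by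
      rw [hBxx, hCxx]; ring
    simpa [← hx] using this
  rw [hkey, hnw]
  nlinarith [htb, ht0, hqq, norm_nonneg w, sq_nonneg (‖(u:H)‖), mul_pos hc₁ hc₂,
    mul_nonneg (le_of_lt hδ) (sq_nonneg ‖(u:H)‖)]
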